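/- For all n ≥ 2, r(B(1,n)) = r(S_{n+1}); that is, r(B(1,n)) = 2n+1 if n is odd and 2n+2 if n is even. -/

import Mathlib

open SimpleGraph

/-- The graph of edges of color `b` in the 2-coloring `c` of a complete graph. -/
def colorGraph {V : Type*} (c : Sym2 V → Bool) (b : Bool) : SimpleGraph V :=
  SimpleGraph.fromRel (fun u v => c s(u, v) = b)

/-- `G` occurs as a (not nec. induced) subgraph of `H`. -/
def ContainsCopy {V W : Type*} (G : SimpleGraph V) (H : SimpleGraph W) : Prop :=
  ∃ f : V → W, Function.Injective f ∧ ∀ ⦃u v : V⦄, G.Adj u v → H.Adj (f u) (f v)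

/-- The coloring `c` contains a monochromatic copy of `G`. -/
def HasMonoCopy {V W : Type*} (G : SimpleGraph V) (c : Sym2 W → Bool) : Prop :=
  ∃ b : Bool, ContainsCopy G (colorGraph c b)

/-- The (diagonal) Ramsey number of a graph `G`. -/
noncomputable def ramseyNumber {V : Type*} (G : SimpleGraph V) : ℕ :=
  sInf {r : ℕ | ∀ c : Sym2 (Fin r) → Bool, HasMonoCopy G c}

/-- The star `S n = K_{1,n}`: center `0`, `n` leaves. -/
def starGraph (n : ℕ) : SimpleGraph (Fin (n + 1)) :=
  SimpleGraph.fromRel (fun u v => u = 0)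

/-- The bistar `B(m,n)`: adjacent centers `inl 0`, `inl 1`, with `m` resp. `n` leaves. -/
def bistar (m n : ℕ) : SimpleGraph (Fin 2 ⊕ Fin m ⊕ Fin n) :=
  SimpleGraph.fromRel (fun u v =>
    (u = Sum.inl 0 ∧ v = Sum.inl 1) ∨
    (u = Sum.inl 0 ∧ ∃ i, v = Sum.inr (Sum.inl i)) ∨
    (u = Sum.inl 1 ∧ ∃ j, v = Sum.inr (Sum.inr j)))

namespace BistarAux

variable {r n : ℕ}

lemma colorGraph_adj {V : Type*} {c : Sym2 V → Bool} {b : Bool} {u v : V} :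
    (colorGraph c b).Adj u v ↔ u ≠ v ∧ c s(u, v) = b := by
  simp only [colorGraph, SimpleGraph.fromRel_adj]
  constructor
  · rintro ⟨h, h1 | h1⟩
    · exact ⟨h, h1⟩
    · exact ⟨h, by rwa [Sym2.eq_swap]⟩
  · rintro ⟨h, h1⟩
    exact ⟨h, Or.inl h1⟩

def nbr (c : Sym2 (Fin r) → Bool) (b : Bool) (v : Fin r) : Finset (Fin r) :=
  Finset.univ.filter (fun u => u ≠ v ∧ c s(v, u) = b)

lemma mem_nbr {c : Sym2 (Fin r) → Bool} {b : Bool} {v u : Fin r} :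
    u ∈ nbr c b v ↔ u ≠ v ∧ c s(v, u) = b := by
  simp [nbr]

lemma nbr_comm {c : Sym2 (Fin r) → Bool} {b : Bool} {u v : Fin r}
    (h : u ∈ nbr c b v) : v ∈ nbr c b u := by
  rw [mem_nbr] at h ⊢
  exact ⟨h.1.symm, by rw [Sym2.eq_swap]; exact h.2⟩

lemma nbr_card_add (c : Sym2 (Fin r) → Bool) (b : Bool) (v : Fin r) :
    (nbr c b v).card + (nbr c (!b) v).card = r - 1 := by
  have hdisj : Disjoint (nbr c b v) (nbr c (!b) v) := by
    rw [Finset.disjoint_left]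
    intro a ha hb
    rw [mem_nbr] at ha hb
    rw [ha.2] at hb
    simp at hb
  have hunion : nbr c b v ∪ nbr c (!b) v = Finset.univ.erase v := by
    ext a
    simp only [Finset.mem_union, mem_nbr, Finset.mem_erase, Finset.mem_univ, and_true]
    constructor
    · rintro (⟨h, _⟩ | ⟨h, _⟩) <;> exact h
    · intro h
      rcases Bool.eq_or_eq_not (c s(v, a)) b with hc | hc
      · exact Or.inl ⟨h, hc⟩
      · exact Or.inr ⟨h, hc⟩
  have := Finset.card_union_of_disjoint hdisj
  rw [hunion, Finset.card_erase_of_mem (Finset.mem_univ v), Finset.card_univ, Fintype.card_fin] at this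
  omega

instance (c : Sym2 (Fin r) → Bool) (b : Bool) : DecidableRel (colorGraph c b).Adj :=
  fun _ _ => decidable_of_iff _ colorGraph_adj.symm

lemma even_sum_nbr (c : Sym2 (Fin r) → Bool) (b : Bool) :
    Even (∑ v : Fin r, (nbr c b v).card) := by
  have hdeg : ∀ v, (nbr c b v).card = (colorGraph c b).degree v := by
    intro v
    rw [SimpleGraph.degree]
    congr 1
    ext u
    rw [SimpleGraph.mem_neighborFinset, colorGraph_adj, mem_nbr]
    exact and_congr_left (fun _ => ne_comm)
  rw [Finset.sum_congr rfl (fun v _ => hdeg v),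
    SimpleGraph.sum_degrees_eq_twice_card_edges]
  exact even_two_mul _


lemma mono_star_of_subset (c : Sym2 (Fin r) → Bool) (b : Bool) (v : Fin r)
    (t : Finset (Fin r)) (ht : t ⊆ nbr c b v) (hcard : t.card = n + 1) :
    ContainsCopy (_root_.starGraph (n + 1)) (colorGraph c b) := by
  have hv : v ∉ t := fun h => (mem_nbr.mp (ht h)).1 rfl
  set e := t.orderIsoOfFin hcard with he
  have het : ∀ j, (e j : Fin r) ∈ t := fun j => (e j).2
  have hAdj : ∀ j, (colorGraph c b).Adj v (e j) := by
    intro j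
    refine colorGraph_adj.mpr ⟨fun h => hv (by rw [h]; exact het j), ?_⟩
    exact (mem_nbr.mp (ht (het j))).2
  refine ⟨fun i => Fin.cases v (fun j => (e j : Fin r)) i, ?_, ?_⟩
  · intro i j hij
    induction i using Fin.cases with
    | zero =>
      induction j using Fin.cases with
      | zero => rfl
      | succ j' =>
        simp only [Fin.cases_zero, Fin.cases_succ] at hij
        exact absurd (hij ▸ het j') hv
    | succ i' =>
      induction j using Fin.cases with
      | zero =>
        simp only [Fin.cases_zero, Fin.cases_succ] at hij
        exact absurd (hij ▸ het i') hv
      | succ j' =>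
        simp only [Fin.cases_succ] at hij
        congr 1
        exact e.injective (Subtype.coe_injective hij)
  · intro x y hxy
    simp only [_root_.starGraph, SimpleGraph.fromRel_adj] at hxy
    obtain ⟨hne, rfl | rfl⟩ := hxy
    · induction y using Fin.cases with
      | zero => exact absurd rfl hne
      | succ j => simpa using hAdj j
    · induction x using Fin.cases with
      | zero => exact absurd rfl hne.symm
      | succ j => simpa using (hAdj j).symm

lemma mono_bistar_of (c : Sym2 (Fin r) → Bool) (b : Bool) (u v w : Fin r)
    (huv : c s(u, v) = b) (huvne : u ≠ v) (hw : w ∈ nbr c b u) (hwv : w ≠ v)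
    (t : Finset (Fin r)) (ht : t ⊆ nbr c b v) (hcard : t.card = n)
    (hut : u ∉ t) (hwt : w ∉ t) :
    ContainsCopy (bistar 1 n) (colorGraph c b) := by
  have hwu : w ≠ u := (mem_nbr.mp hw).1
  have hcw : c s(u, w) = b := (mem_nbr.mp hw).2
  have hvt : v ∉ t := fun h => (mem_nbr.mp (ht h)).1 rfl
  set e := t.orderIsoOfFin hcard with he
  have het : ∀ j, (e j : Fin r) ∈ t := fun j => (e j).2
  have hAuv : (colorGraph c b).Adj u v := colorGraph_adj.mpr ⟨huvne, huv⟩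
  have hAuw : (colorGraph c b).Adj u w := colorGraph_adj.mpr ⟨hwu.symm, hcw⟩
  have hAve : ∀ j, (colorGraph c b).Adj v (e j) := by
    intro j
    refine colorGraph_adj.mpr ⟨fun h => hvt (by rw [h]; exact het j), ?_⟩
    exact (mem_nbr.mp (ht (het j))).2
  refine ⟨fun x => Sum.elim (fun i : Fin 2 => if i = 0 then u else v)
      (Sum.elim (fun _ : Fin 1 => w) (fun j => (e j : Fin r))) x, ?_, ?_⟩
  · rintro (x | x | x) (y | y | y) hxy <;>
      simp only [Sum.elim_inl, Sum.elim_inr] at hxy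
    · split_ifs at hxy with h1 h2 h2
      · rw [h1, h2]
      · exact absurd hxy huvne
      · exact absurd hxy.symm huvne
      · have hx1 : x = 1 := by omega
        have hy1 : y = 1 := by omega
        rw [hx1, hy1]
    · split_ifs at hxy with h1
      · exact absurd hxy.symm hwu
      · exact absurd hxy.symm hwv
    · split_ifs at hxy with h1
      · exact absurd (hxy ▸ het y) hut
      · exact absurd (hxy ▸ het y) hvt
    · split_ifs at hxy with h1
      · exact absurd hxy hwu
      · exact absurd hxy hwv
    · rw [Subsingleton.elim x y]
    · exact absurd (hxy ▸ het y) hwt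
    · split_ifs at hxy with h1
      · exact absurd (hxy.symm ▸ het x) hut
      · exact absurd (hxy.symm ▸ het x) hvt
    · exact absurd (hxy.symm ▸ het x) hwt
    · have : x = y := e.injective (Subtype.coe_injective hxy)
      rw [this]
  · intro x y hxy
    simp only [bistar, SimpleGraph.fromRel_adj] at hxy
    obtain ⟨hne, h | h⟩ := hxy <;>
      rcases h with ⟨rfl, rfl⟩ | ⟨rfl, i, rfl⟩ | ⟨rfl, j, rfl⟩ <;>
      simp only [Sum.elim_inl, Sum.elim_inr, if_pos rfl]
    · simpa using hAuv
    · simpa using hAuw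
    · simpa using hAve j
    · simpa using hAuv.symm
    · simpa using hAuw.symm
    · simpa using (hAve j).symm


lemma no_mono_star {m : ℕ} (c : Sym2 (Fin m) → Bool)
    (hdeg : ∀ b v, (nbr c b v).card ≤ n) : ¬ HasMonoCopy (_root_.starGraph (n + 1)) c := by
  rintro ⟨b, f, hinj, hadj⟩
  have hmem : ∀ j : Fin (n + 1), f j.succ ∈ nbr c b (f 0) := by
    intro j
    have hA : (_root_.starGraph (n + 1)).Adj 0 j.succ := by
      simp [_root_.starGraph, SimpleGraph.fromRel_adj, (Fin.succ_ne_zero j).symm]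
    have := colorGraph_adj.mp (hadj hA)
    exact mem_nbr.mpr ⟨this.1.symm, this.2⟩
  have hcard := Finset.card_le_card_of_injOn (s := (Finset.univ : Finset (Fin (n + 1))))
    (fun j : Fin (n + 1) => f j.succ) (fun j _ => hmem j)
    (fun a _ a' _ h => Fin.succ_injective _ (hinj h))
  rw [Finset.card_univ, Fintype.card_fin] at hcard
  have := hdeg b (f 0)
  omega

lemma no_mono_bistar {m : ℕ} (c : Sym2 (Fin m) → Bool)
    (hdeg : ∀ b v, (nbr c b v).card ≤ n) : ¬ HasMonoCopy (bistar 1 n) c := by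
  rintro ⟨b, f, hinj, hadj⟩
  set g : Fin (n + 1) → Fin m :=
    fun j => Fin.cases (f (Sum.inl 0)) (fun i => f (Sum.inr (Sum.inr i))) j with hg
  have hmem : ∀ j : Fin (n + 1), g j ∈ nbr c b (f (Sum.inl 1)) := by
    intro j
    induction j using Fin.cases with
    | zero =>
      have hA : (bistar 1 n).Adj (Sum.inl 1) (Sum.inl 0) := by
        simp [bistar, SimpleGraph.fromRel_adj]
      have := colorGraph_adj.mp (hadj hA)
      exact mem_nbr.mpr ⟨this.1.symm, this.2⟩
    | succ i =>
      have hA : (bistar 1 n).Adj (Sum.inl 1) (Sum.inr (Sum.inr i)) := by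
        simp [bistar, SimpleGraph.fromRel_adj]
      have := colorGraph_adj.mp (hadj hA)
      exact mem_nbr.mpr ⟨this.1.symm, this.2⟩
  have hginj : Function.Injective g := by
    intro a a' h
    induction a using Fin.cases with
    | zero =>
      induction a' using Fin.cases with
      | zero => rfl
      | succ i =>
        simp only [hg, Fin.cases_zero, Fin.cases_succ] at h
        exact absurd (hinj h) (by simp)
    | succ i =>
      induction a' using Fin.cases with
      | zero =>
        simp only [hg, Fin.cases_zero, Fin.cases_succ] at h
        exact absurd (hinj h) (by simp)
      | succ i' =>
        simp only [hg, Fin.cases_succ] at h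
        have := hinj h
        simp only [Sum.inr.injEq] at this
        rw [this]
  have hcard := Finset.card_le_card_of_injOn (s := (Finset.univ : Finset (Fin (n + 1))))
    g (fun j _ => hmem j) hginj.injOn
  rw [Finset.card_univ, Fintype.card_fin] at hcard
  have := hdeg b (f (Sum.inl 1))
  omega

lemma claimH (c : Sym2 (Fin r) → Bool) (hno : ¬ HasMonoCopy (bistar 1 n) c)
    (b : Bool) (v : Fin r) (h : n + 2 ≤ (nbr c b v).card) :
    ∀ u ∈ nbr c b v, nbr c b u = {v} := by
  intro u hu
  have hvu : v ∈ nbr c b u := nbr_comm hu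
  have hsub : nbr c b u ⊆ {v} := by
    intro w hw
    rw [Finset.mem_singleton]
    by_contra hwv
    have hcard : n ≤ (((nbr c b v).erase u).erase w).card := by
      have h1 : (nbr c b v).card - 1 ≤ ((nbr c b v).erase u).card :=
        Finset.pred_card_le_card_erase
      have h2 : ((nbr c b v).erase u).card - 1 ≤ (((nbr c b v).erase u).erase w).card :=
        Finset.pred_card_le_card_erase
      omega
    obtain ⟨t, hts, htc⟩ := Finset.exists_subset_card_eq hcard
    apply hno
    refine ⟨b, mono_bistar_of c b u v w ?_ (mem_nbr.mp hu).1 hw hwv t ?_ htc ?_ ?_⟩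
    · rw [Sym2.eq_swap]
      exact (mem_nbr.mp hu).2
    · exact hts.trans ((Finset.erase_subset _ _).trans (Finset.erase_subset _ _))
    · intro hct
      exact Finset.notMem_erase u _ (Finset.mem_of_mem_erase (hts hct))
    · intro hct
      exact Finset.notMem_erase w _ (hts hct)
  exact Finset.Subset.antisymm hsub (Finset.singleton_subset_iff.mpr hvu)

lemma claim1 (c : Sym2 (Fin r) → Bool) (hr : n + 4 ≤ r)
    (hno : ¬ HasMonoCopy (bistar 1 n) c) : ∀ b v, (nbr c b v).card ≤ n + 1 := by
  intro b v
  by_contra hbig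
  push_neg at hbig
  have hH := claimH c hno b v (by omega)
  obtain ⟨u1, hu1, u2, hu2, hne⟩ := Finset.one_lt_card.mp (by omega : 1 < (nbr c b v).card)
  have h1 : nbr c b u1 = {v} := hH u1 hu1
  have h2 : nbr c b u2 = {v} := hH u2 hu2
  have hu2v : u2 ≠ v := (mem_nbr.mp hu2).1
  have hc12 : c s(u1, u2) = !b := by
    have hnot : u2 ∉ nbr c b u1 := by
      rw [h1, Finset.mem_singleton]
      exact hu2v
    rw [mem_nbr] at hnot
    push_neg at hnot
    have := hnot hne.symm
    cases hcb : c s(u1, u2) <;> cases b <;> simp_all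
  have hmem : u2 ∈ nbr c (!b) u1 := mem_nbr.mpr ⟨hne.symm, hc12⟩
  have hcard1 : (nbr c (!b) u1).card = r - 2 := by
    have hadd := nbr_card_add c b u1
    rw [h1, Finset.card_singleton] at hadd
    omega
  have hH2 := claimH c hno (!b) u1 (by omega) u2 hmem
  have hcard2 := nbr_card_add c b u2
  rw [h2, Finset.card_singleton, hH2, Finset.card_singleton] at hcard2
  omega

lemma main_upper (c : Sym2 (Fin r) → Bool) (hr : n + 4 ≤ r)
    (hv : ∃ b v, n + 1 ≤ (nbr c b v).card) : HasMonoCopy (bistar 1 n) c := by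
  by_contra hno
  obtain ⟨b, v, hdeg⟩ := hv
  have hc1 := claim1 c hr hno
  have hcard : (nbr c b v).card = n + 1 := le_antisymm (hc1 b v) hdeg
  have claim2 : ∀ u ∈ nbr c b v, nbr c b u ⊆ insert v (nbr c b v) := by
    intro u hu w hw
    rw [Finset.mem_insert]
    by_contra hcon
    push_neg at hcon
    obtain ⟨hwv, hwN⟩ := hcon
    apply hno
    have ht : ((nbr c b v).erase u).card = n := by
      rw [Finset.card_erase_of_mem hu, hcard]
      rfl
    refine ⟨b, mono_bistar_of c b u v w ?_ (mem_nbr.mp hu).1 hw hwv _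
      (Finset.erase_subset _ _) ht (Finset.notMem_erase _ _) ?_⟩
    · rw [Sym2.eq_swap]
      exact (mem_nbr.mp hu).2
    · intro hwt
      exact hwN (Finset.mem_of_mem_erase hwt)
  set S := insert v (nbr c b v) with hS
  have hvS : v ∈ S := Finset.mem_insert_self _ _
  have hScard : S.card = n + 2 := by
    rw [hS, Finset.card_insert_of_notMem (fun h => (mem_nbr.mp h).1 rfl), hcard]
  have hcc : (Sᶜ).card = r - (n + 2) := by
    rw [Finset.card_compl, hScard, Fintype.card_fin]
  have hT : (Sᶜ : Finset (Fin r)).Nonempty := by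
    rw [← Finset.card_pos, hcc]
    omega
  obtain ⟨t, htc⟩ := hT
  have ht : t ∉ S := Finset.mem_compl.mp htc
  have hsub : nbr c b t ⊆ Sᶜ.erase t := by
    intro x hx
    rw [Finset.mem_erase, Finset.mem_compl]
    refine ⟨(mem_nbr.mp hx).1, fun hxS => ?_⟩
    rw [hS, Finset.mem_insert] at hxS
    rcases hxS with rfl | hxN
    · exact ht (Finset.mem_insert_of_mem (nbr_comm hx))
    · exact ht (claim2 x hxN (nbr_comm hx))
  have hble : (nbr c b t).card ≤ r - n - 3 := by
    have hlee := Finset.card_le_card hsub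
    have hce : (Sᶜ.erase t).card = (Sᶜ).card - 1 := Finset.card_erase_of_mem htc
    omega
  have hsum := nbr_card_add c b t
  have := hc1 (!b) t
  omega


lemma exists_deg_even (c : Sym2 (Fin (2 * n + 2)) → Bool) :
    ∃ b v, n + 1 ≤ (nbr c b v).card := by
  by_contra hc
  push_neg at hc
  have h := nbr_card_add c true (0 : Fin (2 * n + 2))
  rw [Bool.not_true] at h
  have h1 := hc true 0
  have h2 := hc false 0
  omega

lemma exists_deg_odd (hodd : Odd n) (c : Sym2 (Fin (2 * n + 1)) → Bool) :
    ∃ b v, n + 1 ≤ (nbr c b v).card := by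
  by_contra hc
  push_neg at hc
  have hall : ∀ v, (nbr c true v).card = n := by
    intro v
    have h := nbr_card_add c true v
    rw [Bool.not_true] at h
    have h1 := hc true v
    have h2 := hc false v
    omega
  have heven := even_sum_nbr c true
  rw [Finset.sum_congr rfl (fun v _ => hall v), Finset.sum_const, Finset.card_univ,
    Fintype.card_fin, smul_eq_mul] at heven
  have hoddp : Odd ((2 * n + 1) * n) := Nat.odd_mul.mpr ⟨⟨n, by ring⟩, hodd⟩
  exact (Nat.not_odd_iff_even.mpr heven) hoddp

def lowP (m k d : ℕ) : Prop := (1 ≤ d ∧ d ≤ k) ∨ (m ≤ d + k ∧ d + 1 ≤ m) ∨ 2 * d = m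

instance (m k d : ℕ) : Decidable (lowP m k d) := by unfold lowP; infer_instance

def myD (m a b : ℕ) : ℕ := if b ≤ a then a - b else a + m - b

lemma myD_symm {m k : ℕ} {a b : ℕ} (ha : a < m) (hb : b < m) :
    decide (lowP m k (myD m a b)) = decide (lowP m k (myD m b a)) := by
  rw [decide_eq_decide]
  unfold lowP myD
  split_ifs <;> omega

def lowC (m k : ℕ) : Sym2 (Fin m) → Bool :=
  Sym2.lift ⟨fun u v => decide (lowP m k (myD m u.val v.val)),
    fun u v => myD_symm u.isLt v.isLt⟩

lemma lowC_deg_true {m k N : ℕ} (hcond : k + k + (if m % 2 = 0 then 1 else 0) ≤ N)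
    (v : Fin m) : (nbr (lowC m k) true v).card ≤ N := by
  classical
  set F : Finset ℕ := (Finset.Icc 1 k ∪ Finset.Icc (m - k) (m - 1)) ∪
    (if m % 2 = 0 then {m / 2} else ∅) with hF
  have hmap : ∀ u ∈ nbr (lowC m k) true v, myD m v.val u.val ∈ F := by
    intro u hu
    obtain ⟨hne, hc⟩ := mem_nbr.mp hu
    have hP : lowP m k (myD m v.val u.val) := by
      have heq : lowC m k s(v, u) = decide (lowP m k (myD m v.val u.val)) := rfl
      rw [heq] at hc
      exact of_decide_eq_true hc
    have hvlt := v.isLt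
    have hult := u.isLt
    have hne' : v.val ≠ u.val := fun h => hne (Fin.ext h.symm)
    have hd1 : 1 ≤ myD m v.val u.val ∧ myD m v.val u.val ≤ m - 1 := by
      unfold myD
      split_ifs <;> omega
    rw [hF]
    simp only [Finset.mem_union, Finset.mem_Icc]
    rcases hP with h | h | h
    · exact Or.inl (Or.inl ⟨h.1, h.2⟩)
    · exact Or.inl (Or.inr ⟨by omega, by omega⟩)
    · right
      have hm2 : m % 2 = 0 := by omega
      rw [if_pos hm2]
      simp only [Finset.mem_singleton]
      omega
  have hinj : Set.InjOn (fun u : Fin m => myD m v.val u.val) (nbr (lowC m k) true v) := by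
    intro a _ b _ hab
    have ha := a.isLt
    have hb := b.isLt
    have hv := v.isLt
    apply Fin.ext
    have hab2 : myD m v.val a.val = myD m v.val b.val := hab
    unfold myD at hab2
    split_ifs at hab2 <;> omega
  have hcard := Finset.card_le_card_of_injOn _ hmap hinj
  have hFcard : F.card ≤ N := by
    have hm0 : 0 < m := v.pos
    by_cases hm2 : m % 2 = 0
    · rw [hF, if_pos hm2]
      rw [if_pos hm2] at hcond
      refine le_trans (Finset.card_union_le _ _) ?_
      refine le_trans (Nat.add_le_add_right (Finset.card_union_le _ _) _) ?_
      simp only [Nat.card_Icc, Finset.card_singleton]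
      omega
    · rw [hF, if_neg hm2]
      rw [if_neg hm2] at hcond
      refine le_trans (Finset.card_union_le _ _) ?_
      simp only [Nat.card_Icc, Finset.union_empty, Finset.card_empty]
      refine le_trans (Nat.add_le_add_right (Finset.card_union_le _ _) _) ?_
      simp only [Nat.card_Icc]
      omega
  omega

lemma lowC_deg_false {m k N : ℕ}
    (hcond : m ≤ N + 2 * k + 1 + (if m % 2 = 0 then 1 else 0))
    (v : Fin m) : (nbr (lowC m k) false v).card ≤ N := by
  classical
  set F : Finset ℕ := if m % 2 = 0 then
      (Finset.Icc (k + 1) (m / 2 - 1) ∪ Finset.Icc (m / 2 + 1) (m - 1 - k))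
    else Finset.Icc (k + 1) (m - 1 - k) with hF
  have hmap : ∀ u ∈ nbr (lowC m k) false v, myD m v.val u.val ∈ F := by
    intro u hu
    obtain ⟨hne, hc⟩ := mem_nbr.mp hu
    have hP : ¬ lowP m k (myD m v.val u.val) := by
      have heq : lowC m k s(v, u) = decide (lowP m k (myD m v.val u.val)) := rfl
      rw [heq] at hc
      exact of_decide_eq_false hc
    have hvlt := v.isLt
    have hult := u.isLt
    have hne' : v.val ≠ u.val := fun h => hne (Fin.ext h.symm)
    have hd1 : 1 ≤ myD m v.val u.val ∧ myD m v.val u.val ≤ m - 1 := by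
      unfold myD
      split_ifs <;> omega
    unfold lowP at hP
    rw [hF]
    split_ifs with hm2 <;> simp only [Finset.mem_union, Finset.mem_Icc] <;> omega
  have hinj : Set.InjOn (fun u : Fin m => myD m v.val u.val) (nbr (lowC m k) false v) := by
    intro a _ b _ hab
    have ha := a.isLt
    have hb := b.isLt
    have hv := v.isLt
    apply Fin.ext
    have hab2 : myD m v.val a.val = myD m v.val b.val := hab
    unfold myD at hab2
    split_ifs at hab2 <;> omega
  have hcard := Finset.card_le_card_of_injOn _ hmap hinj
  have hFcard : F.card ≤ N := by
    have hm0 : 0 < m := v.pos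
    rw [hF]
    split_ifs with hm2
    · have h2 := Finset.card_union_le (Finset.Icc (k + 1) (m / 2 - 1))
        (Finset.Icc (m / 2 + 1) (m - 1 - k))
      rw [Nat.card_Icc, Nat.card_Icc] at h2
      rw [if_pos hm2] at hcond
      omega
    · rw [Nat.card_Icc]
      rw [if_neg hm2] at hcond
      omega
  omega


lemma transfer {V : Type*} {G : SimpleGraph V} {m m' : ℕ} (g : Fin m → Fin m')
    (hg : Function.Injective g) (c : Sym2 (Fin m') → Bool)
    (h : HasMonoCopy G (fun e => c (Sym2.map g e))) : HasMonoCopy G c := by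
  obtain ⟨b, f, hf, hadj⟩ := h
  refine ⟨b, g ∘ f, hg.comp hf, fun u v huv => ?_⟩
  have hA := colorGraph_adj.mp (hadj huv)
  refine colorGraph_adj.mpr ⟨fun hh => hA.1 (hg hh), ?_⟩
  have := hA.2
  rwa [Sym2.map_pair_eq] at this

lemma ramsey_eq {V : Type*} (G : SimpleGraph V) (R R' : ℕ) (hR' : R' + 1 = R)
    (hmem : ∀ c : Sym2 (Fin R) → Bool, HasMonoCopy G c)
    (hbad : ∃ c : Sym2 (Fin R') → Bool, ¬ HasMonoCopy G c) :
    ramseyNumber G = R := by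
  obtain ⟨c0, hc0⟩ := hbad
  have hRmem : R ∈ {r : ℕ | ∀ c : Sym2 (Fin r) → Bool, HasMonoCopy G c} := hmem
  refine le_antisymm (Nat.sInf_le hRmem) (le_csInf ⟨R, hRmem⟩ ?_)
  intro m hm
  by_contra hlt
  push_neg at hlt
  have hle : m ≤ R' := by omega
  exact hc0 (transfer (Fin.castLE hle) (Fin.castLE_injective hle) c0
    (hm (fun e => c0 (Sym2.map (Fin.castLE hle) e))))

lemma ramsey_pair (n R R' : ℕ) (hr : n + 4 ≤ R) (hR' : R' + 1 = R)
    (hex : ∀ c : Sym2 (Fin R) → Bool, ∃ b v, n + 1 ≤ (nbr c b v).card)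
    (hbad : ∃ c : Sym2 (Fin R') → Bool, ∀ b v, (nbr c b v).card ≤ n) :
    ramseyNumber (bistar 1 n) = R ∧ ramseyNumber (_root_.starGraph (n + 1)) = R := by
  obtain ⟨c0, hc0⟩ := hbad
  constructor
  · refine ramsey_eq _ R R' hR' (fun c => main_upper c hr (hex c)) ⟨c0, no_mono_bistar c0 hc0⟩
  · refine ramsey_eq _ R R' hR' (fun c => ?_) ⟨c0, no_mono_star c0 hc0⟩
    obtain ⟨b, v, h⟩ := hex c
    obtain ⟨t, hts, htc⟩ := Finset.exists_subset_card_eq h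
    exact ⟨b, mono_star_of_subset c b v t hts htc⟩

end BistarAux

theorem bistar_one_n_ramsey (n : ℕ) (hn : 2 ≤ n) :
    ramseyNumber (bistar 1 n) = ramseyNumber (_root_.starGraph (n + 1)) ∧
    ramseyNumber (bistar 1 n) = if Odd n then 2 * n + 1 else 2 * n + 2 := by
  open BistarAux in
  rcases Nat.even_or_odd n with he | ho
  · have hmod0 : n % 2 = 0 := Nat.even_iff.mp he
    rw [if_neg (by rw [Nat.odd_iff]; omega)]
    have hmod : n % 2 = 0 := Nat.even_iff.mp he
    have hpair := BistarAux.ramsey_pair n (2 * n + 2) (2 * n + 1) (by omega) rfl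
      (fun c => BistarAux.exists_deg_even c)
      ⟨BistarAux.lowC (2 * n + 1) (n / 2), fun b v => ?_⟩
    · exact ⟨hpair.1.trans hpair.2.symm, hpair.1⟩
    · cases b
      · exact BistarAux.lowC_deg_false (by rw [if_neg (by omega)]; omega) v
      · exact BistarAux.lowC_deg_true (by rw [if_neg (by omega)]; omega) v
  · rw [if_pos ho]
    have hmod : n % 2 = 1 := Nat.odd_iff.mp ho
    have hpair := BistarAux.ramsey_pair n (2 * n + 1) (2 * n) (by omega) rfl
      (fun c => BistarAux.exists_deg_odd ho c)
      ⟨BistarAux.lowC (2 * n) ((n - 1) / 2), fun b v => ?_⟩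
    · exact ⟨hpair.1.trans hpair.2.symm, hpair.1⟩
    · cases b
      · exact BistarAux.lowC_deg_false (by rw [if_pos (by omega)]; omega) v
      · exact BistarAux.lowC_deg_true (by rw [if_pos (by omega)]; omega) v
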